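/- For every integer p ≥ 1, the p-th Catalan number satisfies C_p = (∑_{t=1}^{p+1} p^{t-1} · s(p+1, t)) / (∑_{t=1}^{p+1} s(p+1, t)), i.e., C_p is the average of p^{t-1} over all (p+1)! permutations of p+1 elements, where t is the number of cycles. -/

import Mathlib

def stirling : ℕ → ℕ → ℕ
  | 0, 0 => 1
  | 0, _ + 1 => 0
  | _ + 1, 0 => 0
  | n + 1, k + 1 => n * stirling n (k + 1) + stirling n k

lemma stirling_eq_zero_of_lt : ∀ {n k : ℕ}, n < k → stirling n k = 0
  | 0, _ + 1, _ => rfl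
  | n + 1, k + 1, h => by
    have h1 : n < k := Nat.lt_of_succ_lt_succ h
    have h2 : n < k + 1 := Nat.lt_succ_of_lt h1
    simp [stirling, stirling_eq_zero_of_lt h1, stirling_eq_zero_of_lt h2]

lemma stir_poly (n : ℕ) (x : ℚ) :
    ∑ t ∈ Finset.range (n + 1), (stirling n t : ℚ) * x ^ t
      = ∏ i ∈ Finset.range n, (x + i) := by
  induction n with
  | zero => simp [stirling]
  | succ n ih =>
    have h0 : (stirling (n + 1) 0 : ℚ) * x ^ 0 = 0 := by simp [stirling]
    have hshift : ∑ k ∈ Finset.range (n + 1), (stirling n (k + 1) : ℚ) * x ^ (k + 1)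
        = (∑ t ∈ Finset.range (n + 1), (stirling n t : ℚ) * x ^ t) - (stirling n 0 : ℚ) := by
      rw [eq_sub_iff_add_eq]
      have := Finset.sum_range_succ' (fun t => (stirling n t : ℚ) * x ^ t) (n + 1)
      rw [Finset.sum_range_succ] at this
      simpa [stirling_eq_zero_of_lt (Nat.lt_succ_self n)] using this.symm
    have hns : (n : ℚ) * (stirling n 0 : ℚ) = 0 := by
      cases n with
      | zero => simp
      | succ m => simp [stirling]
    calc ∑ t ∈ Finset.range (n + 2), (stirling (n + 1) t : ℚ) * x ^ t
        = ∑ k ∈ Finset.range (n + 1), (stirling (n + 1) (k + 1) : ℚ) * x ^ (k + 1) := by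
          rw [Finset.sum_range_succ' (fun t => (stirling (n + 1) t : ℚ) * x ^ t) (n + 1), h0,
            add_zero]
      _ = (n : ℚ) * ∑ k ∈ Finset.range (n + 1), (stirling n (k + 1) : ℚ) * x ^ (k + 1)
            + x * ∑ k ∈ Finset.range (n + 1), (stirling n k : ℚ) * x ^ k := by
          rw [Finset.mul_sum, Finset.mul_sum, ← Finset.sum_add_distrib]
          refine Finset.sum_congr rfl fun k _ => ?_
          show ((n * stirling n (k + 1) + stirling n k : ℕ) : ℚ) * x ^ (k + 1) = _
          push_cast
          ring
      _ = (x + n) * ∏ i ∈ Finset.range n, (x + i) := by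
          rw [hshift, ih]
          rw [mul_sub, hns] -- careful
          ring
      _ = ∏ i ∈ Finset.range (n + 1), (x + i) := by
          rw [Finset.prod_range_succ]; ring

lemma asc_prod (n k : ℕ) :
    ∏ i ∈ Finset.range k, ((n : ℚ) + i) = (n.ascFactorial k : ℚ) := by
  induction k with
  | zero => simp
  | succ k ih =>
    rw [Finset.prod_range_succ, ih, Nat.ascFactorial_succ]
    push_cast
    ring

theorem stmt_14 (p : ℕ) (hp : 1 ≤ p) :
    (catalan p : ℚ) =
      (∑ t ∈ Finset.Icc 1 (p + 1), (p : ℚ) ^ (t - 1) * (stirling (p + 1) t : ℚ)) /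
        (∑ t ∈ Finset.Icc 1 (p + 1), (stirling (p + 1) t : ℚ)) := by
  have hp0 : (p : ℚ) ≠ 0 := by positivity
  have hicc : Finset.Icc 1 (p + 1) = Finset.Ioc 0 (p + 1) := by
    ext t; simp [Nat.lt_iff_add_one_le]
  have hrange : ∀ x : ℚ, ∑ t ∈ Finset.Icc 1 (p + 1), (stirling (p + 1) t : ℚ) * x ^ t
      = ∏ i ∈ Finset.range (p + 1), (x + i) := by
    intro x
    rw [← stir_poly (p + 1) x, Finset.range_eq_Ico]
    rw [hicc]
    rw [show Finset.Ico 0 (p + 2) = Finset.Ioc 0 (p + 1) ∪ {0} from by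
      ext t; cases t <;> simp [Nat.lt_succ_iff, Nat.succ_le_iff]]
    rw [Finset.sum_union (by simp)]
    simp [stirling]
  -- denominator
  have hD : ∑ t ∈ Finset.Icc 1 (p + 1), (stirling (p + 1) t : ℚ) = (Nat.factorial (p + 1) : ℚ) := by
    have := hrange 1
    simp only [one_pow, mul_one] at this
    rw [this, show ((Nat.factorial (p + 1) : ℚ))
        = ((∏ i ∈ Finset.range (p + 1), (i + 1) : ℕ) : ℚ) from by
      rw [Finset.prod_range_add_one_eq_factorial]]
    push_cast
    exact Finset.prod_congr rfl fun i _ => by ring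
  -- numerator
  have hN : (p : ℚ) * ∑ t ∈ Finset.Icc 1 (p + 1), (p : ℚ) ^ (t - 1) * (stirling (p + 1) t : ℚ)
      = (p.ascFactorial (p + 1) : ℚ) := by
    rw [Finset.mul_sum, ← asc_prod, ← hrange p]
    refine Finset.sum_congr rfl fun t ht => ?_
    obtain ⟨h1, _⟩ := Finset.mem_Icc.mp ht
    obtain ⟨s, rfl⟩ := Nat.exists_eq_add_of_le h1
    rw [show 1 + s - 1 = s from by omega]
    push_cast
    ring
  have hfact : Nat.factorial (p - 1) * p.ascFactorial (p + 1) = Nat.factorial (2 * p) := by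
    have := Nat.factorial_mul_ascFactorial' p (p + 1) hp
    rwa [show p + (p + 1) - 1 = 2 * p by omega] at this
  have hcat : ((p + 1) * catalan p) * (Nat.factorial p * Nat.factorial p) = Nat.factorial (2 * p) := by
    rw [succ_mul_catalan_eq_centralBinom, Nat.centralBinom]
    have := Nat.choose_mul_factorial_mul_factorial (show p ≤ 2 * p by omega)
    rw [show 2 * p - p = p by omega] at this
    rw [← this]; ring
  -- ℚ versions
  have hpf : (p : ℚ) * (Nat.factorial (p - 1) : ℚ) = (Nat.factorial p : ℚ) := by
    exact_mod_cast congrArg (Nat.cast (R := ℚ)) (Nat.mul_factorial_pred (by omega))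
  have hq1 : (Nat.factorial (p - 1) : ℚ) * (p.ascFactorial (p + 1) : ℚ)
      = (Nat.factorial (2 * p) : ℚ) := by exact_mod_cast congrArg (Nat.cast (R := ℚ)) hfact
  have hq2 : ((p : ℚ) + 1) * (catalan p : ℚ) * ((Nat.factorial p : ℚ) * (Nat.factorial p : ℚ))
      = (Nat.factorial (2 * p) : ℚ) := by exact_mod_cast congrArg (Nat.cast (R := ℚ)) hcat
  have hsucc : (Nat.factorial (p + 1) : ℚ) = ((p : ℚ) + 1) * (Nat.factorial p : ℚ) := by
    rw [Nat.factorial_succ]; push_cast; ring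
  have hf1 : (Nat.factorial (p - 1) : ℚ) ≠ 0 := by
    exact_mod_cast Nat.factorial_ne_zero (p - 1)
  have hDne : (Nat.factorial (p + 1) : ℚ) ≠ 0 := by
    exact_mod_cast Nat.factorial_ne_zero (p + 1)
  have hq : (catalan p : ℚ) * (Nat.factorial (p + 1) : ℚ) * (p : ℚ)
      = (p.ascFactorial (p + 1) : ℚ) := by
    apply mul_left_cancel₀ hf1
    calc (Nat.factorial (p - 1) : ℚ) * ((catalan p : ℚ) * (Nat.factorial (p + 1) : ℚ) * (p : ℚ))
        = ((p : ℚ) + 1) * (catalan p : ℚ)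
            * ((Nat.factorial p : ℚ) * ((p : ℚ) * (Nat.factorial (p - 1) : ℚ))) := by
          rw [hsucc]; ring
      _ = (Nat.factorial (2 * p) : ℚ) := by rw [hpf, ← hq2]
      _ = _ := hq1.symm
  rw [hD, eq_div_iff hDne]
  apply mul_left_cancel₀ hp0
  rw [hN, ← hq]; ring
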